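/- Let G be a finite groupoid and k a commutative ring. There is an isomorphism between the category of right kG-comodule algebras and the category of G-graded k-algebras, i.e. algebras A = ⊕_{σ∈G₁} A_σ with A_σ A_τ ⊆ A_{στ} when t(τ)=s(σ), A_σ A_τ = 0 otherwise, and 1_A ∈ ⊕_{x∈G₀} A_x. -/

import Mathlib

/-- A finite groupoid, given by sets of objects and morphisms with source,
target, identities, partial composition and inverses. -/
structure FinGroupoid where
  O : Type
  M : Type
  [fO : Fintype O]
  [fM : Fintype M]
  [dO : DecidableEq O]
  [dM : DecidableEq M]
  s : M → O
  t : M → O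
  e : O → M
  comp : M → M → M
  inv : M → M
  s_e : ∀ x, s (e x) = x
  t_e : ∀ x, t (e x) = x
  s_comp : ∀ σ τ, t τ = s σ → s (comp σ τ) = s τ
  t_comp : ∀ σ τ, t τ = s σ → t (comp σ τ) = t σ
  comp_assoc : ∀ σ τ ρ, t τ = s σ → t ρ = s τ →
    comp (comp σ τ) ρ = comp σ (comp τ ρ)
  e_comp : ∀ σ, comp (e (t σ)) σ = σ
  comp_e : ∀ σ, comp σ (e (s σ)) = σ
  s_inv : ∀ σ, s (inv σ) = t σ
  t_inv : ∀ σ, t (inv σ) = s σ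
  inv_comp : ∀ σ, comp (inv σ) σ = e (s σ)
  comp_inv : ∀ σ, comp σ (inv σ) = e (t σ)

attribute [instance] FinGroupoid.fO FinGroupoid.fM FinGroupoid.dO FinGroupoid.dM

/-- The multiplication of the groupoid algebra `kG`, on the free module
`G.M → k`:  `u_σ * u_τ = u_{στ}` if `t τ = s σ` and `0` otherwise. -/
noncomputable def gmul (k : Type) [CommRing k] (G : FinGroupoid) (f g : G.M → k) :
    G.M → k := fun m =>
  ∑ p : G.M × G.M,
    if G.t p.2 = G.s p.1 ∧ G.comp p.1 p.2 = m then f p.1 * g p.2 else 0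

/-- The unit `∑_{x ∈ G₀} u_{id_x}` of the groupoid algebra. -/
noncomputable def gone (k : Type) [CommRing k] (G : FinGroupoid) : G.M → k :=
  fun m => ∑ x : G.O, if G.e x = m then 1 else 0


/-- A right `kG`-comodule algebra structure on a `k`-algebra `A`; since `kG`
is free on the morphisms of `G`, the coaction `ρ : A → A ⊗ kG` is encoded by
its components `ρ(a) = ∑_σ (rho a σ) ⊗ u_σ`. -/
structure CoactStr (k : Type) [CommRing k] (G : FinGroupoid) (A : Type)
    [Ring A] [Algebra k A] where
  rho : A →ₗ[k] (G.M → A)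
  coassoc : ∀ (a : A) (σ τ : G.M),
    rho (rho a τ) σ = if σ = τ then rho a σ else 0
  counit : ∀ a : A, ∑ σ : G.M, rho a σ = a
  rho_mul : ∀ (a b : A) (σ : G.M), rho (a * b) σ =
    ∑ p : G.M × G.M,
      if G.t p.2 = G.s p.1 ∧ G.comp p.1 p.2 = σ then rho a p.1 * rho b p.2
      else 0
  /-- `ρ(1) ∈ A ⊗ (kG)^L` -/
  weak : ∀ σ : G.M, (∀ x : G.O, σ ≠ G.e x) → rho 1 σ = 0

/-- A `G`-grading on a `k`-algebra `A`: a direct sum decomposition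
`A = ⊕_{σ∈G₁} A_σ` with `A_σ A_τ ⊆ A_{στ}` when `t(τ)=s(σ)`, `A_σ A_τ = 0`
otherwise, and `1 ∈ ⊕_{x∈G₀} A_{id_x}`. -/
structure GradStr (k : Type) [CommRing k] (G : FinGroupoid) (A : Type)
    [Ring A] [Algebra k A] where
  sub : G.M → Submodule k A
  internal : DirectSum.IsInternal sub
  mul_comp : ∀ σ τ : G.M, G.t τ = G.s σ →
    ∀ a ∈ sub σ, ∀ b ∈ sub τ, a * b ∈ sub (G.comp σ τ)
  mul_ncomp : ∀ σ τ : G.M, G.t τ ≠ G.s σ →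
    ∀ a ∈ sub σ, ∀ b ∈ sub τ, a * b = 0
  one_mem : (1 : A) ∈ ⨆ x : G.O, sub (G.e x)


section Aux

variable {k : Type} [CommRing k] {G : FinGroupoid} {A : Type} [Ring A] [Algebra k A]

/-- The grading submodule attached to a coaction: `A_σ = {a | ρ(a) = a ⊗ u_σ}`. -/
def CoactStr.sub (ρ : CoactStr k G A) (σ : G.M) : Submodule k A where
  carrier := {a : A | ∀ τ : G.M, ρ.rho a τ = if τ = σ then a else 0}
  zero_mem' := fun τ => by
    rw [map_zero]
    simp
  add_mem' := fun {a b} ha hb τ => by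
    rw [map_add]
    simp only [Pi.add_apply, ha τ, hb τ]
    split <;> simp
  smul_mem' := fun c a ha τ => by
    rw [map_smul]
    simp only [Pi.smul_apply, ha τ]
    split <;> simp

lemma CoactStr.mem_sub_iff (ρ : CoactStr k G A) {σ : G.M} {a : A} :
    a ∈ ρ.sub σ ↔ ∀ τ : G.M, ρ.rho a τ = if τ = σ then a else 0 := Iff.rfl

lemma CoactStr.rho_mem (ρ : CoactStr k G A) (a : A) (σ : G.M) :
    ρ.rho a σ ∈ ρ.sub σ := by
  intro τ
  rw [ρ.coassoc a τ σ]
  split <;> simp_all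

lemma CoactStr.rho_coe (ρ : CoactStr k G A)
    (x : DirectSum G.M fun σ => ρ.sub σ) (τ : G.M) :
    ρ.rho (DirectSum.coeAddMonoidHom ρ.sub x) τ = (x τ : A) := by
  conv_lhs => rw [← DirectSum.sum_univ_of x]
  rw [map_sum, map_sum]
  simp only [DirectSum.coeAddMonoidHom_of, Finset.sum_apply]
  have : ∀ σ : G.M, ρ.rho ((x σ : A)) τ = if τ = σ then (x σ : A) else 0 :=
    fun σ => (x σ).2 τ
  rw [Finset.sum_congr rfl (fun σ _ => this σ)]
  simp

/-- The grading attached to a coaction. -/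
def CoactStr.toGrad (ρ : CoactStr k G A) : GradStr k G A where
  sub := ρ.sub
  internal := by
    constructor
    · intro x y hxy
      refine DFinsupp.ext fun τ => Subtype.ext ?_
      have hx := ρ.rho_coe x τ
      have hy := ρ.rho_coe y τ
      rw [hxy] at hx
      rw [← hx, ← hy]
    · intro a
      refine ⟨∑ σ : G.M, DirectSum.of (fun σ => ρ.sub σ) σ ⟨ρ.rho a σ, ρ.rho_mem a σ⟩, ?_⟩
      rw [map_sum]
      simp only [DirectSum.coeAddMonoidHom_of]
      exact ρ.counit a
  mul_comp := by
    intro σ τ hst a ha b hb μ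
    rw [ρ.rho_mul, Finset.sum_eq_single (σ, τ)]
    · rw [ha σ, hb τ, if_pos rfl, if_pos rfl]
      by_cases hc : G.comp σ τ = μ
      · rw [if_pos ⟨hst, hc⟩, if_pos hc.symm]
      · rw [if_neg (fun h => hc h.2), if_neg (fun h => hc h.symm)]
    · intro p _ hp
      by_cases h1 : p.1 = σ
      · by_cases h2 : p.2 = τ
        · exact absurd (Prod.ext h1 h2) hp
        · rw [hb p.2, if_neg h2, mul_zero]; simp
      · rw [ha p.1, if_neg h1, zero_mul]; simp
    · intro h
      exact absurd (Finset.mem_univ _) h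
  mul_ncomp := by
    intro σ τ hst a ha b hb
    have h0 : ∀ μ : G.M, ρ.rho (a * b) μ = 0 := by
      intro μ
      rw [ρ.rho_mul, Finset.sum_eq_single (σ, τ)]
      · rw [if_neg (fun h => hst h.1)]
      · intro p _ hp
        by_cases h1 : p.1 = σ
        · by_cases h2 : p.2 = τ
          · exact absurd (Prod.ext h1 h2) hp
          · rw [hb p.2, if_neg h2, mul_zero]; simp
        · rw [ha p.1, if_neg h1, zero_mul]; simp
      · intro h
        exact absurd (Finset.mem_univ _) h
    have := ρ.counit (a * b)
    rw [Finset.sum_congr rfl (fun μ _ => h0 μ)] at this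
    simpa using this.symm
  one_mem := by
    have key : ∀ σ : G.M, ρ.rho 1 σ ∈ ⨆ x : G.O, ρ.sub (G.e x) := by
      intro σ
      by_cases h : ∃ x : G.O, σ = G.e x
      · obtain ⟨x, rfl⟩ := h
        exact Submodule.mem_iSup_of_mem x (ρ.rho_mem 1 _)
      · push_neg at h
        rw [ρ.weak σ h]
        exact zero_mem _
    exact ρ.counit 1 ▸ Submodule.sum_mem _ (fun σ _ => key σ)

/-- The coaction attached to a grading. -/
noncomputable def GradStr.toCoactRho (g : GradStr k G A) : A →ₗ[k] (G.M → A) :=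
  LinearMap.pi fun σ => (g.sub σ).subtype ∘ₗ
    (DirectSum.component k G.M (fun σ => (g.sub σ : Submodule k A)) σ) ∘ₗ
    (LinearEquiv.ofBijective (DirectSum.coeLinearMap g.sub) g.internal).symm.toLinearMap

lemma GradStr.toCoactRho_apply (g : GradStr k G A) (a : A) (σ : G.M) :
    g.toCoactRho a σ =
      ((LinearEquiv.ofBijective (DirectSum.coeLinearMap g.sub) g.internal).symm a σ : A) :=
  rfl

lemma GradStr.toCoactRho_mem (g : GradStr k G A) (a : A) (σ : G.M) :
    g.toCoactRho a σ ∈ g.sub σ :=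
  ((LinearEquiv.ofBijective (DirectSum.coeLinearMap g.sub) g.internal).symm a σ).2

lemma GradStr.toCoactRho_of_mem (g : GradStr k G A) {σ : G.M} {a : A}
    (h : a ∈ g.sub σ) (τ : G.M) :
    g.toCoactRho a τ = if τ = σ then a else 0 := by
  by_cases hτ : τ = σ
  · subst hτ
    rw [toCoactRho_apply, g.internal.ofBijective_coeLinearMap_of_mem h, if_pos rfl]
  · rw [toCoactRho_apply, g.internal.ofBijective_coeLinearMap_of_mem_ne (Ne.symm hτ) h,
      if_neg hτ, ZeroMemClass.coe_zero]

lemma GradStr.sum_toCoactRho (g : GradStr k G A) (a : A) :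
    ∑ σ : G.M, g.toCoactRho a σ = a := by
  set E := LinearEquiv.ofBijective (DirectSum.coeLinearMap g.sub) g.internal with hE
  conv_rhs => rw [← E.apply_symm_apply a]
  conv_rhs => rw [show E (E.symm a) = DirectSum.coeLinearMap g.sub (E.symm a) from rfl]
  conv_rhs => rw [← DirectSum.sum_univ_of (E.symm a)]
  rw [map_sum]
  simp only [DirectSum.coeLinearMap_of]
  rfl

/-- The comodule algebra structure attached to a grading. -/
noncomputable def GradStr.toCoact (g : GradStr k G A) : CoactStr k G A where
  rho := g.toCoactRho
  coassoc := by
    intro a σ τ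
    rw [g.toCoactRho_of_mem (g.toCoactRho_mem a τ) σ]
    split <;> simp_all
  counit := g.sum_toCoactRho
  rho_mul := by
    intro a b σ
    conv_lhs => rw [← g.sum_toCoactRho a, ← g.sum_toCoactRho b, Finset.sum_mul_sum]
    rw [← Finset.sum_product', map_sum, Finset.sum_apply]
    rw [show (Finset.univ ×ˢ Finset.univ : Finset (G.M × G.M)) = Finset.univ from by simp]
    refine Finset.sum_congr rfl fun p _ => ?_
    by_cases hc : G.t p.2 = G.s p.1
    · have hm := g.mul_comp p.1 p.2 hc _ (g.toCoactRho_mem a p.1) _ (g.toCoactRho_mem b p.2)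
      rw [g.toCoactRho_of_mem hm σ]
      by_cases h2 : G.comp p.1 p.2 = σ
      · rw [if_pos h2.symm, if_pos ⟨hc, h2⟩]
      · rw [if_neg (fun h => h2 h.symm), if_neg (fun h => h2 h.2)]
    · rw [g.mul_ncomp p.1 p.2 hc _ (g.toCoactRho_mem a p.1) _ (g.toCoactRho_mem b p.2),
        map_zero, if_neg (fun h => hc h.1)]
      rfl
  weak := by
    intro σ hσ
    refine Submodule.iSup_induction (motive := fun a => g.toCoactRho a σ = 0)
      (fun x : G.O => g.sub (G.e x)) g.one_mem ?_ ?_ ?_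
    · intro x a ha
      show g.toCoactRho a σ = 0
      rw [g.toCoactRho_of_mem ha σ, if_neg (hσ x)]
    · show g.toCoactRho 0 σ = 0
      rw [map_zero]
      rfl
    · intro x y hx hy
      show g.toCoactRho (x + y) σ = 0
      rw [map_add, Pi.add_apply, hx, hy, add_zero]

lemma GradStr.toCoact_rho_eq (g : GradStr k G A) {a : A} {c : G.M → A}
    (hc : ∀ τ, c τ ∈ g.sub τ) (ha : a = ∑ τ : G.M, c τ) (σ : G.M) :
    g.toCoact.rho a σ = c σ := by
  rw [ha]
  show g.toCoactRho (∑ τ : G.M, c τ) σ = c σ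
  rw [map_sum, Finset.sum_apply]
  rw [Finset.sum_congr rfl (fun τ _ => g.toCoactRho_of_mem (hc τ) σ)]
  simp

lemma CoactStr.ext' {ρ₁ ρ₂ : CoactStr k G A} (h : ρ₁.rho = ρ₂.rho) : ρ₁ = ρ₂ := by
  cases ρ₁; cases ρ₂; cases h; rfl

lemma GradStr.ext' {g₁ g₂ : GradStr k G A} (h : g₁.sub = g₂.sub) : g₁ = g₂ := by
  cases g₁; cases g₂; cases h; rfl

/-- The bijection between coactions and gradings. -/
noncomputable def coactEquivGrad : CoactStr k G A ≃ GradStr k G A where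
  toFun := CoactStr.toGrad
  invFun := GradStr.toCoact
  left_inv ρ := by
    refine CoactStr.ext' ?_
    refine LinearMap.ext fun a => funext fun σ => ?_
    exact GradStr.toCoact_rho_eq _ (fun τ => ρ.rho_mem a τ) (ρ.counit a).symm σ
  right_inv g := by
    refine GradStr.ext' (funext fun σ => ?_)
    ext a
    constructor
    · intro h
      have h1 := h σ
      rw [if_pos rfl] at h1
      exact h1 ▸ g.toCoactRho_mem a σ
    · intro h τ
      exact g.toCoactRho_of_mem h τ

end Aux

/-- for a finite groupoid `G` and a commutative ring `k`, the
category of right `kG`-comodule algebras is isomorphic to the category of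
`G`-graded `k`-algebras: there is a bijection between `kG`-comodule algebra
structures and `G`-gradings, sending a coaction `ρ` to the grading with
`A_σ = {a | ρ(a) = a ⊗ u_σ}`, under which an algebra map is colinear if and
only if it is graded. -/

theorem kG_comodule_algebras_are_graded_algebras
    (k : Type) [CommRing k] (G : FinGroupoid) :
    ∃ e : ∀ (A : Type) (_ : Ring A) (_ : Algebra k A),
        CoactStr k G A ≃ GradStr k G A,
      (∀ (A : Type) (iR : Ring A) (iA : Algebra k A)
        (ρ : CoactStr k G A) (σ : G.M),
        ((e A iR iA ρ).sub σ : Set A) =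
          {a : A | ∀ τ : G.M, ρ.rho a τ = if τ = σ then a else 0}) ∧
      (∀ (A : Type) (iR : Ring A) (iA : Algebra k A)
        (B : Type) (iR' : Ring B) (iA' : Algebra k B)
        (ρA : CoactStr k G A) (ρB : CoactStr k G B) (f : A →ₐ[k] B),
        (∀ (a : A) (σ : G.M), f (ρA.rho a σ) = ρB.rho (f a) σ) ↔
        (∀ (σ : G.M) (a : A),
          a ∈ (e A iR iA ρA).sub σ → f a ∈ (e B iR' iA' ρB).sub σ)) := by
  refine ⟨fun A iR iA => @coactEquivGrad k _ G A iR iA, ?_, ?_⟩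
  · intro A iR iA ρ σ
    rfl
  · intro A iR iA B iR' iA' ρA ρB f
    constructor
    · intro hcol σ a ha τ
      rw [← hcol a τ, ha τ]
      split
      · rfl
      · exact map_zero f
    · intro hg a σ
      have hfa : f a = ∑ τ : G.M, f (ρA.rho a τ) := by
        rw [← map_sum, ρA.counit]
      have hmem : ∀ τ : G.M, ∀ μ : G.M,
          ρB.rho (f (ρA.rho a τ)) μ = if μ = τ then f (ρA.rho a τ) else 0 :=
        fun τ => hg τ _ (ρA.rho_mem a τ)
      rw [hfa, map_sum, Finset.sum_apply,
        Finset.sum_congr rfl (fun τ _ => hmem τ σ)]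
      simp
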